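/- For every pair of real numbers a ≤ b with b ≥ 0, there exists a symmetric bilinear form φ on ℝ³ (with the standard inner product) such that the set of sectional curvature values of R_φ, namely {κ_{R_φ}(x,y) : x, y linearly independent}, is exactly the closed interval [a, b]. -/

import Mathlib

/-- The canonical algebraic curvature tensor associated to a bilinear form `φ`:
`R_φ(x,y,z,w) = φ(x,w)φ(y,z) − φ(x,z)φ(y,w)`. -/
def canonCT {V : Type*} (φ : V → V → ℝ) (x y z w : V) : ℝ :=
  φ x w * φ y z - φ x z * φ y w

/-- The sectional curvature of the 2-plane spanned by `x` and `y` with respect to a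
curvature tensor `R`: `κ_R(x,y) = R(x,y,y,x)/(⟨x,x⟩⟨y,y⟩ − ⟨x,y⟩²)`. -/
noncomputable def sectCurv {V : Type*} [NormedAddCommGroup V] [InnerProductSpace ℝ V]
    (R : V → V → V → V → ℝ) (x y : V) : ℝ :=
  R x y y x / ((inner ℝ x x : ℝ) * (inner ℝ y y : ℝ) - (inner ℝ x y : ℝ) ^ 2)

noncomputable def dphi (l1 l2 l3 : ℝ) : EuclideanSpace ℝ (Fin 3) →ₗ[ℝ] EuclideanSpace ℝ (Fin 3) →ₗ[ℝ] ℝ :=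
  LinearMap.mk₂ ℝ (fun u v => l1 * u 0 * v 0 + l2 * u 1 * v 1 + l3 * u 2 * v 2)
    (by intro m n u; simp [PiLp.add_apply]; ring)
    (by intro c m u; simp [PiLp.smul_apply, smul_eq_mul]; ring)
    (by intro m u v; simp [PiLp.add_apply]; ring)
    (by intro c m u; simp [PiLp.smul_apply, smul_eq_mul]; ring)

lemma dphi_apply (l1 l2 l3 : ℝ) (u v : EuclideanSpace ℝ (Fin 3)) :
    dphi l1 l2 l3 u v = l1 * u 0 * v 0 + l2 * u 1 * v 1 + l3 * u 2 * v 2 := rfl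

lemma inner3 (x y : EuclideanSpace ℝ (Fin 3)) :
    (inner ℝ x y : ℝ) = x 0 * y 0 + x 1 * y 1 + x 2 * y 2 := by
  simp [PiLp.inner_apply, RCLike.inner_apply, Fin.sum_univ_three]; ring

lemma gram_pos (x y : EuclideanSpace ℝ (Fin 3)) (h : LinearIndependent ℝ ![x, y]) :
    0 < (x 0 * y 1 - x 1 * y 0)^2 + (x 0 * y 2 - x 2 * y 0)^2 + (x 1 * y 2 - x 2 * y 1)^2 := by
  rw [linearIndependent_fin2] at h
  obtain ⟨hy, hxy⟩ := h
  simp only [Matrix.cons_val_one, Matrix.head_cons, Matrix.cons_val_zero] at hy hxy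
  by_contra hc
  push_neg at hc
  have hp : x 0 * y 1 - x 1 * y 0 = 0 := by nlinarith [sq_nonneg (x 0 * y 1 - x 1 * y 0), sq_nonneg (x 0 * y 2 - x 2 * y 0), sq_nonneg (x 1 * y 2 - x 2 * y 1)]
  have hq : x 0 * y 2 - x 2 * y 0 = 0 := by nlinarith [sq_nonneg (x 0 * y 1 - x 1 * y 0), sq_nonneg (x 0 * y 2 - x 2 * y 0), sq_nonneg (x 1 * y 2 - x 2 * y 1)]
  have hr : x 1 * y 2 - x 2 * y 1 = 0 := by nlinarith [sq_nonneg (x 0 * y 1 - x 1 * y 0), sq_nonneg (x 0 * y 2 - x 2 * y 0), sq_nonneg (x 1 * y 2 - x 2 * y 1)]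
  have hy' : y 0 ≠ 0 ∨ y 1 ≠ 0 ∨ y 2 ≠ 0 := by
    by_contra h0
    push_neg at h0
    apply hy
    ext i
    fin_cases i <;> simp [h0.1, h0.2.1, h0.2.2]
  have key0 : y 0 ≠ 0 → (x 0 / y 0) • y = x := by
    intro h0; ext j; fin_cases j
    · show x 0 / y 0 * y 0 = x 0; field_simp
    · show x 0 / y 0 * y 1 = x 1; field_simp; linarith
    · show x 0 / y 0 * y 2 = x 2; field_simp; linarith
  have key1 : y 1 ≠ 0 → (x 1 / y 1) • y = x := by
    intro h1; ext j; fin_cases j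
    · show x 1 / y 1 * y 0 = x 0; field_simp; linarith
    · show x 1 / y 1 * y 1 = x 1; field_simp
    · show x 1 / y 1 * y 2 = x 2; field_simp; linarith
  have key2 : y 2 ≠ 0 → (x 2 / y 2) • y = x := by
    intro h2; ext j; fin_cases j
    · show x 2 / y 2 * y 0 = x 0; field_simp; linarith
    · show x 2 / y 2 * y 1 = x 1; field_simp; linarith
    · show x 2 / y 2 * y 2 = x 2; field_simp
  rcases hy' with h0 | h1 | h2
  · exact hxy _ (key0 h0)
  · exact hxy _ (key1 h1)
  · exact hxy _ (key2 h2)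

lemma aux_interval (a b l1 l2 l3 : ℝ) (hab : a ≤ b)
    (h12 : l1 * l2 = b) (h13 : l1 * l3 = a)
    (h23a : a ≤ l2 * l3) (h23b : l2 * l3 ≤ b) :
    {c : ℝ | ∃ x y : EuclideanSpace ℝ (Fin 3), LinearIndependent ℝ ![x, y] ∧
        c = sectCurv (canonCT (fun u v => dphi l1 l2 l3 u v)) x y} = Set.Icc a b := by
  ext c
  simp only [Set.mem_setOf_eq, Set.mem_Icc]
  constructor
  · rintro ⟨x, y, hxy, rfl⟩
    have hD := gram_pos x y hxy
    set p := x 0 * y 1 - x 1 * y 0 with hpdef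
    set q := x 0 * y 2 - x 2 * y 0 with hqdef
    set r := x 1 * y 2 - x 2 * y 1 with hrdef
    have hDen : (inner ℝ x x : ℝ) * (inner ℝ y y : ℝ) - (inner ℝ x y : ℝ) ^ 2
        = p ^ 2 + q ^ 2 + r ^ 2 := by
      rw [inner3, inner3, inner3, hpdef, hqdef, hrdef]; ring
    have hNum : canonCT (fun u v => dphi l1 l2 l3 u v) x y y x
        = b * p ^ 2 + a * q ^ 2 + (l2 * l3) * r ^ 2 := by
      rw [← h12, ← h13]
      simp only [canonCT, dphi_apply, hpdef, hqdef, hrdef]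
      ring
    unfold sectCurv
    rw [hDen, hNum]
    constructor
    · rw [le_div_iff₀ hD]
      nlinarith [sq_nonneg p, sq_nonneg q, sq_nonneg r]
    · rw [div_le_iff₀ hD]
      nlinarith [sq_nonneg p, sq_nonneg q, sq_nonneg r]
  · rintro ⟨hac, hcb⟩
    obtain ⟨t, ht0, ht1, htc⟩ : ∃ t : ℝ, 0 ≤ t ∧ t ≤ 1 ∧ b + (a - b) * t = c := by
      rcases eq_or_lt_of_le hab with h | h
      · exact ⟨0, le_refl 0, zero_le_one, by rw [← h] at hcb ⊢; linarith⟩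
      · refine ⟨(b - c) / (b - a), div_nonneg (by linarith) (by linarith), ?_, ?_⟩
        · rw [div_le_one (by linarith)]; linarith
        · have h1 : (b - c) / (b - a) * (b - a) = b - c := div_mul_cancel₀ _ (by linarith)
          linear_combination -h1
    set x : EuclideanSpace ℝ (Fin 3) := !₂[1, 0, 0] with hxdef
    set y : EuclideanSpace ℝ (Fin 3) := !₂[0, Real.sqrt (1 - t), Real.sqrt t] with hydef
    have hx0 : x 0 = 1 := rfl
    have hx1 : x 1 = 0 := rfl
    have hx2 : x 2 = 0 := rfl
    have hy0 : y 0 = 0 := rfl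
    have hy1 : y 1 = Real.sqrt (1 - t) := rfl
    have hy2 : y 2 = Real.sqrt t := rfl
    have hs1 : y 1 ^ 2 = 1 - t := by rw [hy1, Real.sq_sqrt (by linarith)]
    have hs2 : y 2 ^ 2 = t := by rw [hy2, Real.sq_sqrt ht0]
    refine ⟨x, y, ?_, ?_⟩
    · rw [linearIndependent_fin2]
      constructor
      · simp only [Matrix.cons_val_one, Matrix.head_cons]
        intro h
        have h1 : y 1 = 0 := by rw [show y = 0 from h]; rfl
        have h2 : y 2 = 0 := by rw [show y = 0 from h]; rfl
        have e1 : (1 : ℝ) - t = 0 := by rw [← hs1, h1]; ring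
        have e2 : t = 0 := by rw [← hs2, h2]; ring
        linarith
      · intro s h
        simp only [Matrix.cons_val_one, Matrix.head_cons, Matrix.cons_val_zero] at h
        have h0 : (s • y) 0 = x 0 := by rw [h]
        have : s * y 0 = x 0 := h0
        rw [hy0, hx0] at this
        simp at this
    · have A : y 1 * y 1 = 1 - t := by rw [← hs1]; ring
      have B : y 2 * y 2 = t := by rw [← hs2]; ring
      simp only [sectCurv, canonCT, dphi_apply, inner3, hx0, hx1, hx2, hy0]
      have A' : l2 * y 1 * y 1 = l2 * (1 - t) := by rw [mul_assoc, A]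
      have B' : l3 * y 2 * y 2 = l3 * t := by rw [mul_assoc, B]
      rw [A, B, A', B']
      have hden : ((1:ℝ) * 1 + 0 * 0 + 0 * 0) * (0 * 0 + (1 - t) + t) - (1 * 0 + 0 * y 1 + 0 * y 2) ^ 2 = 1 := by ring
      rw [hden, div_one]
      linear_combination (t-1)*h12 - t*h13 - htc

/-- Every closed interval `[a, b]` with `b ≥ 0` arises as the exact set of sectional
curvature values of `R_φ` for some symmetric bilinear form `φ` on `ℝ³`. -/
theorem exists_canonCT_with_sectional_curvature_interval :
    ∀ a b : ℝ, a ≤ b → 0 ≤ b →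
      ∃ φ : EuclideanSpace ℝ (Fin 3) →ₗ[ℝ] EuclideanSpace ℝ (Fin 3) →ₗ[ℝ] ℝ,
        (∀ x y : EuclideanSpace ℝ (Fin 3), φ x y = φ y x) ∧
        {c : ℝ | ∃ x y : EuclideanSpace ℝ (Fin 3), LinearIndependent ℝ ![x, y] ∧
          c = sectCurv (canonCT (fun u v => φ u v)) x y} = Set.Icc a b := by
  intro a b hab hb
  rcases eq_or_lt_of_le hb with h0 | h0
  · -- b = 0 : take l1 = 1, l2 = 0, l3 = a
    refine ⟨dphi 1 0 a, fun x y => by rw [dphi_apply, dphi_apply]; ring, ?_⟩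
    exact aux_interval a b 1 0 a hab (by rw [← h0]; ring) (by ring)
      (by rw [zero_mul]; linarith) (by rw [zero_mul]; linarith)
  · -- b > 0 : take l1 = √b, l2 = √b, l3 = a / √b
    have hsb : Real.sqrt b ≠ 0 := by positivity
    refine ⟨dphi (Real.sqrt b) (Real.sqrt b) (a / Real.sqrt b),
      fun x y => by rw [dphi_apply, dphi_apply]; ring, ?_⟩
    have hmul : Real.sqrt b * Real.sqrt b = b := Real.mul_self_sqrt hb
    have hma : Real.sqrt b * (a / Real.sqrt b) = a := by field_simp
    exact aux_interval a b (Real.sqrt b) (Real.sqrt b) (a / Real.sqrt b) hab hmul hma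
      (by rw [hma]) (by rw [hma]; exact hab)
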